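/- Let X be a subshift over an alphabet 𝒜, given by forbidden words F, and let X^OTW be the corresponding OTW-subshift. Then for every ξ ∈ dom(σ̂) one has π(σ̂(ξ)) = σ(π(ξ)), and moreover the map π : 𝒰̂ → X^OTW is surjective. -/

import Mathlib

open Set

section Subshift

variable {A : Type*}

/-- The word `w` occurs as a block of `x` at position `i`. -/
def IsBlockAt (x : ℕ → A) (w : List A) (i : ℕ) : Prop :=
  ∀ j, ∀ _ : j < w.length, x (i + j) = w[j]

/-- The subshift `X_F ⊆ 𝒜^ℕ` determined by the set `F` of forbidden words. -/
def SubshiftOf (F : Set (List A)) : Set (ℕ → A) :=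
  {x | ∀ w ∈ F, ∀ i, ¬ IsBlockAt x w i}

/-- The language of the subshift: all finite words occurring in some element of `X_F`. -/
def Lang (F : Set (List A)) : Set (List A) :=
  {w | ∃ x ∈ SubshiftOf F, ∃ i, IsBlockAt x w i}

/-- Concatenation of a finite word with an infinite sequence. -/
def wcat (w : List A) (x : ℕ → A) : ℕ → A := fun n =>
  if h : n < w.length then w[n] else x (n - w.length)

/-- `C(α,β) = {β x ∈ X : α x ∈ X}`. -/
def Cset (F : Set (List A)) (α β : List A) : Set (ℕ → A) :=
  {y | ∃ x : ℕ → A, y = wcat β x ∧ wcat β x ∈ SubshiftOf F ∧ wcat α x ∈ SubshiftOf F}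

/-- The cylinder set `Z_β = C(ω,β)`. -/
def Zcyl (F : Set (List A)) (β : List A) : Set (ℕ → A) := Cset F [] β

/-- The follower set `F_α = C(α,ω)`. -/
def Fol (F : Set (List A)) (α : List A) : Set (ℕ → A) := Cset F α []

/-- The relative range `r(S,w) = {x ∈ X : w x ∈ S}`. -/
def relRange (F : Set (List A)) (S : Set (ℕ → A)) (w : List A) : Set (ℕ → A) :=
  {x | x ∈ SubshiftOf F ∧ wcat w x ∈ S}

/-- Membership in the Boolean algebra `𝒰` of subsets of `X` generated by the sets
`C(α,β)`, `α, β ∈ L_X`: closed under finite unions, finite intersections and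
complements in `X`. -/
inductive InU (F : Set (List A)) : Set (ℕ → A) → Prop
  | base {α β : List A} (hα : α ∈ Lang F) (hβ : β ∈ Lang F) : InU F (Cset F α β)
  | union {S T : Set (ℕ → A)} : InU F S → InU F T → InU F (S ∪ T)
  | inter {S T : Set (ℕ → A)} : InU F S → InU F T → InU F (S ∩ T)
  | compl {S : Set (ℕ → A)} : InU F S → InU F (SubshiftOf F \ S)

/-- `αβ⁻¹` is in reduced form in the free group on the alphabet:
`α` and `β` do not end in the same letter. -/
def ReducedPair (α β : List A) : Prop :=
  ¬ ∃ c : A, α.getLast? = some c ∧ β.getLast? = some c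

/-- Ultrafilters (= prime filters) of the Boolean algebra `𝒰`. -/
structure UltraU (F : Set (List A)) where
  sets : Set (Set (ℕ → A))
  mem_inU : ∀ S ∈ sets, InU F S
  nonempty : sets.Nonempty
  empty_not_mem : ∅ ∉ sets
  inter_mem : ∀ S ∈ sets, ∀ T ∈ sets, S ∩ T ∈ sets
  superset_mem : ∀ S ∈ sets, ∀ T : Set (ℕ → A), InU F T → S ⊆ T → T ∈ sets
  prime : ∀ S T : Set (ℕ → A), InU F S → InU F T → S ∪ T ∈ sets → S ∈ sets ∨ T ∈ sets

/-- The basic (compact) open set `O_S = {ξ ∈ 𝒰̂ : S ∈ ξ}` of the Stone dual `𝒰̂`. -/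
def Oset (F : Set (List A)) (S : Set (ℕ → A)) : Set (UltraU F) := {ξ | S ∈ ξ.sets}

/-- The Stone topology on `𝒰̂`. -/
instance (F : Set (List A)) : TopologicalSpace (UltraU F) :=
  TopologicalSpace.generateFrom {V | ∃ S : Set (ℕ → A), InU F S ∧ V = Oset F S}

/-- The graph of the partially defined map `σ̂` on `𝒰̂`:
`sigmaHatRel F ξ η` holds iff `ξ ∈ dom σ̂` and `η = σ̂(ξ)`. -/
def sigmaHatRel (F : Set (List A)) (ξ η : UltraU F) : Prop :=
  ∃ a : A, Zcyl F [a] ∈ ξ.sets ∧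
    η.sets = {B : Set (ℕ → A) | InU F B ∧ ∃ S ∈ ξ.sets, relRange F S [a] ⊆ B}

/- The OTW subshift, modelled inside `ℕ → Option A`; a finite word corresponds to a
sequence that is eventually `none` (`none` playing the role of the symbol `∞`). -/

/-- The shift map, deleting the first letter (it sends sequences of length `≤ 1`
to the empty sequence). -/
def shiftO (y : ℕ → Option A) : ℕ → Option A := fun i => y (i + 1)

/-- An infinite sequence, as an element of the OTW model. -/
def ofSeq (x : ℕ → A) : ℕ → Option A := fun i => some (x i)

/-- A finite word, as an element of the OTW model. -/
def ofWord (w : List A) : ℕ → Option A := fun i =>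
  if h : i < w.length then some w[i] else none

/-- Concatenation of a finite word with an element of the OTW model. -/
def wcatO (w : List A) (y : ℕ → Option A) : ℕ → Option A := fun n =>
  if h : n < w.length then some w[n] else y (n - w.length)

/-- The finite words belonging to `X^fin`: those `w` for which there are infinitely many
letters `a` such that `w a y ∈ X^inf` for some `y`. -/
def XFin (F : Set (List A)) : Set (List A) :=
  {w | {a : A | ∃ y : ℕ → A, wcat (w ++ [a]) y ∈ SubshiftOf F}.Infinite}

/-- The OTW subshift `X^OTW = X^inf ∪ X^fin`. -/
def OTW (F : Set (List A)) : Set (ℕ → Option A) :=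
  ofSeq '' SubshiftOf F ∪ ofWord '' XFin F

theorem ofSeq_mem_OTW {F : Set (List A)} {x : ℕ → A} (hx : x ∈ SubshiftOf F) :
    ofSeq x ∈ OTW F := Or.inl ⟨x, hx, rfl⟩

theorem ofWord_mem_OTW {F : Set (List A)} {w : List A} (hw : w ∈ XFin F) :
    ofWord w ∈ OTW F := Or.inr ⟨w, hw, rfl⟩

/-- The generalised cylinder `𝒵(w,F') = {y ∈ X^OTW : y` begins with `w`, and the next
letter of `y` is not in `F'}`. -/
def genCyl (F : Set (List A)) (w : List A) (F' : Set A) : Set (ℕ → Option A) :=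
  {y | y ∈ OTW F ∧ (∀ j, ∀ _ : j < w.length, y j = some w[j]) ∧
    ∀ a ∈ F', y w.length ≠ some a}

/-- The follower set `ℱ(w) = {y ∈ X^OTW : w y ∈ X^OTW}` in the OTW subshift. -/
def folO (F : Set (List A)) (w : List A) : Set (ℕ → Option A) :=
  {y | y ∈ OTW F ∧ wcatO w y ∈ OTW F}

/-- The topology on `X^OTW`, generated by the generalised cylinders. -/
instance (F : Set (List A)) : TopologicalSpace ↥(OTW F) :=
  TopologicalSpace.generateFrom
    {V | ∃ w ∈ Lang F, ∃ F' : Set A, F'.Finite ∧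
      V = {y : ↥(OTW F) | (y : ℕ → Option A) ∈ genCyl F w F'}}

/-- The graph of the map `π : 𝒰̂ → X^OTW`: `piRel F ξ y` holds iff `π(ξ) = y`.
(`y` begins with a nonempty word `w` iff `Z_w ∈ ξ`.) -/
def piRel (F : Set (List A)) (ξ : UltraU F) (y : ℕ → Option A) : Prop :=
  (∀ i, y i = none → y (i + 1) = none) ∧
  ∀ w : List A, w ≠ [] →
    ((∀ j, ∀ _ : j < w.length, y j = some w[j]) ↔ Zcyl F w ∈ ξ.sets)

end Subshift

section Conjugacy

variable {A₁ A₂ : Type*}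

/-- `h` commutes with the shift maps. -/
def ShiftCommuting (F₁ : Set (List A₁)) (F₂ : Set (List A₂))
    (h : ↥(OTW F₁) → ↥(OTW F₂)) : Prop :=
  ∀ (y : ↥(OTW F₁)) (hy : shiftO (y : ℕ → Option A₁) ∈ OTW F₁),
    (h ⟨shiftO (y : ℕ → Option A₁), hy⟩ : ℕ → Option A₂) =
      shiftO ((h y : ℕ → Option A₂))

/-- `h` is length-preserving: `h y` and `y` have the same length, i.e. the same
positions where the symbol `∞` (here `none`) occurs. -/
def LengthPreserving (F₁ : Set (List A₁)) (F₂ : Set (List A₂))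
    (h : ↥(OTW F₁) → ↥(OTW F₂)) : Prop :=
  ∀ (y : ↥(OTW F₁)) (i : ℕ),
    ((h y : ℕ → Option A₂) i = none ↔ (y : ℕ → Option A₁) i = none)

/-- A conjugacy of OTW subshifts: a homeomorphism commuting with the shifts and
preserving lengths. -/
def IsConjugacy (F₁ : Set (List A₁)) (F₂ : Set (List A₂))
    (h : ↥(OTW F₁) ≃ₜ ↥(OTW F₂)) : Prop :=
  ShiftCommuting F₁ F₂ ⇑h ∧ LengthPreserving F₁ F₂ ⇑h

/-- The image `h̄(S) = h(S)` of a subset `S ⊆ X₁` under (the restriction to `X₁` of)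
a map `h : X₁^OTW → X₂^OTW`. -/
def hbar (F₁ : Set (List A₁)) (F₂ : Set (List A₂))
    (h : ↥(OTW F₁) → ↥(OTW F₂)) (S : Set (ℕ → A₁)) : Set (ℕ → A₂) :=
  {z | ∃ y : ↥(OTW F₁), (y : ℕ → Option A₁) ∈ ofSeq '' S ∧
    ofSeq z = (h y : ℕ → Option A₂)}

end Conjugacy

section AuxProof

variable {A : Type*} {F : Set (List A)}

lemma wcat_nil (x : ℕ → A) : wcat [] x = x := funext fun n => by simp [wcat]

lemma wcat_lt (w : List A) (x : ℕ → A) {n : ℕ} (h : n < w.length) : wcat w x n = w[n] :=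
  dif_pos h

lemma wcat_ge (w : List A) (x : ℕ → A) {n : ℕ} (h : ¬ n < w.length) :
    wcat w x n = x (n - w.length) := dif_neg h

lemma wcat_single_succ (a : A) (f : ℕ → A) (n : ℕ) : wcat [a] f (n + 1) = f n := by
  rw [wcat_ge _ _ (by simp)]
  simp

lemma shift_mem {x : ℕ → A} (hx : x ∈ SubshiftOf F) (k : ℕ) :
    (fun n => x (n + k)) ∈ SubshiftOf F := by
  intro w hw i hblk
  exact hx w hw (i + k) (fun j hj => by
    rw [show i + k + j = i + j + k by ring]; exact hblk j hj)

lemma wcat_prefix_eq {w : List A} {x : ℕ → A}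
    (h : ∀ j, ∀ _ : j < w.length, x j = w[j]) :
    wcat w (fun n => x (n + w.length)) = x := by
  funext n
  by_cases hn : n < w.length
  · rw [wcat_lt _ _ hn, h n hn]
  · rw [wcat_ge _ _ hn]
    congr 1
    omega

lemma mem_Zcyl_iff {x : ℕ → A} (hx : x ∈ SubshiftOf F) (w : List A) :
    x ∈ Zcyl F w ↔ ∀ j, ∀ _ : j < w.length, x j = w[j] := by
  constructor
  · rintro ⟨t, rfl, -, -⟩ j hj
    exact wcat_lt _ _ hj
  · intro h
    refine ⟨fun n => x (n + w.length), (wcat_prefix_eq h).symm, ?_, ?_⟩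
    · rw [wcat_prefix_eq h]; exact hx
    · rw [wcat_nil]; exact shift_mem hx _

lemma Zcyl_subset_subshift (w : List A) : Zcyl F w ⊆ SubshiftOf F := by
  rintro x ⟨t, rfl, h, -⟩
  exact h

lemma mem_Lang_of_prefix {x : ℕ → A} (hx : x ∈ SubshiftOf F) (w : List A)
    (h : ∀ j, ∀ _ : j < w.length, x j = w[j]) : w ∈ Lang F :=
  ⟨x, hx, 0, fun j hj => by rw [Nat.zero_add]; exact h j hj⟩

lemma nil_mem_Lang {x : ℕ → A} (hx : x ∈ SubshiftOf F) : ([] : List A) ∈ Lang F :=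
  ⟨x, hx, 0, fun j hj => by simp at hj⟩

lemma wcat_cons (a : A) (w : List A) (t : ℕ → A) :
    wcat (a :: w) t = wcat [a] (wcat w t) := by
  funext n
  match n with
  | 0 =>
    rw [wcat_lt (a :: w) _ (by simp), wcat_lt [a] _ (by simp)]
    simp
  | n + 1 =>
    rw [wcat_single_succ]
    by_cases hn : n < w.length
    · rw [wcat_lt _ _ hn, wcat_lt (a :: w) _ (by simpa using hn)]
      simp
    · rw [wcat_ge _ _ hn, wcat_ge (a :: w) _ (by simpa using hn)]
      congr 1
      simp only [List.length_cons]
      omega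

lemma wcat_cons_succ (a : A) (w : List A) (t : ℕ → A) (n : ℕ) :
    wcat (a :: w) t (n + 1) = wcat w t n := by
  rw [wcat_cons, wcat_single_succ]

lemma Cset_nil_nil : Cset F ([] : List A) [] = SubshiftOf F := by
  ext x
  constructor
  · rintro ⟨t, rfl, h, -⟩
    exact h
  · intro h
    exact ⟨x, (wcat_nil x).symm, by rwa [wcat_nil], by rwa [wcat_nil]⟩

/-- Key lemma characterizing cylinder membership in `σ̂(ξ)`. -/
lemma eta_key {ξ η : UltraU F} {a : A} (ha : Zcyl F [a] ∈ ξ.sets)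
    (hη : η.sets = {B : Set (ℕ → A) | InU F B ∧ ∃ S ∈ ξ.sets, relRange F S [a] ⊆ B})
    (w : List A) : Zcyl F w ∈ η.sets ↔ Zcyl F (a :: w) ∈ ξ.sets := by
  constructor
  · intro hmem
    rw [hη] at hmem
    obtain ⟨-, S, hS, hsub⟩ := hmem
    have hinter : S ∩ Zcyl F [a] ∈ ξ.sets := ξ.inter_mem S hS _ ha
    have hsub2 : S ∩ Zcyl F [a] ⊆ Zcyl F (a :: w) := by
      rintro v ⟨hvS, x, rfl, hvX, hxX⟩
      rw [wcat_nil] at hxX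
      have hx : x ∈ relRange F S [a] := ⟨hxX, hvS⟩
      obtain ⟨tt, hxeq, hwtX, htX⟩ := hsub hx
      rw [wcat_nil] at htX
      refine ⟨tt, ?_, ?_, by rwa [wcat_nil]⟩
      · rw [hxeq, ← wcat_cons]
      · rw [wcat_cons, ← hxeq]; exact hvX
    have hne : (S ∩ Zcyl F [a]).Nonempty := by
      by_contra h
      rw [Set.not_nonempty_iff_eq_empty] at h
      exact ξ.empty_not_mem (h ▸ hinter)
    obtain ⟨v, hv⟩ := hne
    obtain ⟨tt, hveq, hvX, -⟩ := hsub2 hv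
    have hlang : (a :: w) ∈ Lang F :=
      mem_Lang_of_prefix hvX _ (fun j hj => wcat_lt _ _ hj)
    exact ξ.superset_mem _ hinter _ (InU.base (nil_mem_Lang hvX) hlang) hsub2
  · intro hmem
    -- nonemptiness gives Lang facts
    have hne : (Zcyl F (a :: w)).Nonempty := by
      by_contra h
      rw [Set.not_nonempty_iff_eq_empty] at h
      exact ξ.empty_not_mem (h ▸ hmem)
    obtain ⟨v, tt, rfl, hvX, htX⟩ := hne
    rw [wcat_nil] at htX
    have hwlang : w ∈ Lang F := by
      refine ⟨_, hvX, 1, fun j hj => ?_⟩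
      rw [Nat.add_comm 1 j, wcat_lt (a :: w) _ (by simp only [List.length_cons]; omega)]
      simp
    rw [hη]
    refine ⟨InU.base (nil_mem_Lang hvX) hwlang, Zcyl F (a :: w), hmem, ?_⟩
    rintro x ⟨hxX, t2, heq, hX2, ht2X⟩
    rw [wcat_nil] at ht2X
    have hxeq : x = wcat w t2 := by
      funext n
      have h3 := congrFun heq (n + 1)
      rwa [wcat_single_succ, wcat_cons_succ] at h3
    exact ⟨t2, hxeq, hxeq ▸ hxX, ht2X⟩

lemma none_mono {y : ℕ → Option A} (h : ∀ i, y i = none → y (i + 1) = none)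
    {i k : ℕ} (hik : i ≤ k) (hi : y i = none) : y k = none := by
  induction k, hik using Nat.le_induction with
  | base => exact hi
  | succ n hn ih => exact h n ih

lemma piRel_some_step {ξ : UltraU F} {y z : ℕ → Option A}
    (hy : piRel F ξ y) (hz : piRel F ξ z) {i : ℕ}
    {b : A} (hb : y i = some b) : z i = some b := by
  have hsome : ∀ j, j ≤ i → y j ≠ none := by
    intro j hj hnone
    rw [none_mono hy.1 hj hnone] at hb
    exact nomatch hb
  set v : ℕ → A := fun j => (y j).getD b with hv
  set w : List A := (List.range (i + 1)).map v with hw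
  have hwlen : w.length = i + 1 := by simp [hw]
  have hwget : ∀ j, ∀ hj : j < w.length, w[j] = v j := by
    intro j hj
    simp [hw]
  have hwne : w ≠ [] := by
    intro h
    rw [h] at hwlen
    simp at hwlen
  have hyw : ∀ j, ∀ _ : j < w.length, y j = some w[j] := by
    intro j hj
    rw [hwget j hj]
    have hji : j ≤ i := by omega
    obtain ⟨c, hc⟩ := Option.ne_none_iff_exists'.mp (hsome j hji)
    rw [hc, hv]
    simp [hc]
  have hZ : Zcyl F w ∈ ξ.sets := (hy.2 w hwne).mp hyw
  have hzw := (hz.2 w hwne).mpr hZ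
  have hi' : i < w.length := by omega
  have h1 := hzw i hi'
  have h2 := hyw i hi'
  rw [hb] at h2
  rw [h1, ← h2]

lemma piRel_unique {ξ : UltraU F} {y z : ℕ → Option A}
    (hy : piRel F ξ y) (hz : piRel F ξ z) : y = z := by
  funext i
  match hyi : y i, hzi : z i with
  | none, none => rfl
  | none, some b =>
    have h4 := piRel_some_step hz hy hzi
    rw [h4] at hyi
    exact nomatch hyi
  | some b, _ =>
    rw [← hzi, piRel_some_step hy hz hyi]

end AuxProof

theorem pi_intertwines_shifts_and_surjective {A : Type*} (F : Set (List A)) :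
    (∀ ξ η : UltraU F, sigmaHatRel F ξ η →
      ∀ y y' : ℕ → Option A, piRel F ξ y → piRel F η y' → y' = shiftO y) ∧
    ∀ y ∈ OTW F, ∃ ξ : UltraU F, piRel F ξ y := by
  constructor
  · rintro ξ η ⟨a, ha, hη⟩ y y' hy hy'
    have hy0 : y 0 = some a := by
      have h0 := (hy.2 [a] (by simp)).mpr ha 0 (by simp)
      simpa using h0
    have hshift : piRel F η (shiftO y) := by
      constructor
      · intro i hi
        exact hy.1 (i + 1) hi
      · intro w hw
        rw [eta_key ha hη, ← hy.2 (a :: w) (by simp)]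
        constructor
        · intro h j hj
          match j, hj with
          | 0, _ => simpa using hy0
          | k + 1, hj =>
            have hk : k < w.length := by simpa using hj
            simpa [shiftO] using h k hk
        · intro h j hj
          have h5 := h (j + 1) (by simpa using hj)
          simpa [shiftO] using h5
    exact piRel_unique hy' hshift
  · rintro y (⟨x, hx, rfl⟩ | ⟨u, hu, rfl⟩)
    · -- infinite sequence case: "principal" ultrafilter at x
      refine ⟨⟨{S | InU F S ∧ x ∈ S}, fun S hS => hS.1,
        ⟨Cset F [] [], ⟨InU.base (nil_mem_Lang hx) (nil_mem_Lang hx),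
          by rw [Cset_nil_nil]; exact hx⟩⟩,
        fun h => h.2,
        fun S hS T hT => ⟨InU.inter hS.1 hT.1, hS.2, hT.2⟩,
        fun S hS T hT hsub => ⟨hT, hsub hS.2⟩,
        fun S T hS hT hST => hST.2.elim (fun h => Or.inl ⟨hS, h⟩) (fun h => Or.inr ⟨hT, h⟩)⟩,
        ?_, ?_⟩
      · intro i hi
        exact absurd hi (by simp [ofSeq])
      · intro w hw
        constructor
        · intro h
          have hpre : ∀ j, ∀ _ : j < w.length, x j = w[j] := by
            intro j hj
            have h6 := h j hj
            simpa [ofSeq] using h6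
          exact ⟨InU.base (nil_mem_Lang hx) (mem_Lang_of_prefix hx w hpre),
            (mem_Zcyl_iff hx w).mpr hpre⟩
        · rintro ⟨-, hxZ⟩ j hj
          have h7 := (mem_Zcyl_iff hx w).mp hxZ j hj
          simp [ofSeq, h7]
    · -- finite word case
      have hE : {a : A | ∃ t, wcat (u ++ [a]) t ∈ SubshiftOf F}.Infinite := hu
      haveI := hE.to_subtype
      obtain ⟨V, hV⟩ := Ultrafilter.exists_le
        (Filter.cofinite : Filter {a : A | ∃ t, wcat (u ++ [a]) t ∈ SubshiftOf F})
      choose t ht using fun a : {a : A | ∃ t, wcat (u ++ [a]) t ∈ SubshiftOf F} => a.2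
      set p : {a : A | ∃ t, wcat (u ++ [a]) t ∈ SubshiftOf F} → (ℕ → A) :=
        fun a => wcat (u ++ [(a : A)]) (t a) with hp
      have hpX : ∀ a, p a ∈ SubshiftOf F := ht
      obtain ⟨a₀⟩ : Nonempty {a : A | ∃ t, wcat (u ++ [a]) t ∈ SubshiftOf F} :=
        hE.to_subtype.nonempty
      have hnil : ([] : List A) ∈ Lang F := nil_mem_Lang (hpX a₀)
      -- prefix evaluation of p a
      have hpeval : ∀ a, ∀ j, ∀ _ : j < u.length, p a j = u[j] := by
        intro a j hj
        simp only [hp]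
        rw [wcat_lt _ _ (by simp; omega)]
        exact List.getElem_append_left hj
      have hmemV : ∀ {M : Set {a : A | ∃ t, wcat (u ++ [a]) t ∈ SubshiftOf F}},
          M ∈ V → M.Infinite := by
        intro M hM
        by_contra hnot
        rw [Set.not_infinite] at hnot
        have hfin := hnot
        have hc : Mᶜ ∈ V := hV (by rw [Filter.mem_cofinite, compl_compl]; exact hfin)
        have : (∅ : Set _) ∈ V := by
          have h8 := Filter.inter_mem hM hc
          rwa [Set.inter_compl_self] at h8
        exact Ultrafilter.empty_notMem this
      refine ⟨⟨{S | InU F S ∧ {a | p a ∈ S} ∈ V}, fun S hS => hS.1,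
        ⟨Cset F [] [], ⟨InU.base hnil hnil, ?_⟩⟩, ?_,
        fun S hS T hT => ⟨InU.inter hS.1 hT.1, ?_⟩,
        fun S hS T hT hsub => ⟨hT, Filter.mem_of_superset hS.2 (fun a haS => hsub haS)⟩,
        fun S T hS hT hST => ?_⟩, ?_, ?_⟩
      · rw [Cset_nil_nil]
        exact Filter.univ_mem' (fun a => hpX a)
      · intro h
        have h9 : {a | p a ∈ (∅ : Set (ℕ → A))} ∈ V := h.2
        simp only [Set.mem_empty_iff_false] at h9
        exact Ultrafilter.empty_notMem (f := V) (by simpa using h9)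
      · have := Filter.inter_mem hS.2 hT.2
        exact Filter.mem_of_superset this (fun a ⟨h1, h2⟩ => ⟨h1, h2⟩)
      · have h10 : {a | p a ∈ S} ∪ {a | p a ∈ T} ∈ V := by
          refine Filter.mem_of_superset hST.2 (fun a haST => ?_)
          exact haST.elim Or.inl Or.inr
        rcases Ultrafilter.union_mem_iff.mp h10 with h | h
        · exact Or.inl ⟨hS, h⟩
        · exact Or.inr ⟨hT, h⟩
      · -- none propagation for ofWord
        intro i hi
        have hiu : ¬ i < u.length := by
          intro hlt
          rw [ofWord, dif_pos hlt] at hi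
          exact nomatch hi
        rw [ofWord, dif_neg (by omega)]
      · -- the cylinder characterization
        intro w hw
        constructor
        · intro h
          have hwu : w.length ≤ u.length := by
            by_contra hlen
            push_neg at hlen
            have h11 := h u.length hlen
            rw [ofWord, dif_neg (by omega)] at h11
            exact nomatch h11
          have hpre : ∀ j, ∀ _ : j < w.length, u[j]'(by omega) = w[j] := by
            intro j hj
            have h12 := h j hj
            rw [ofWord, dif_pos (by omega)] at h12
            exact Option.some.inj h12
          have hppre : ∀ a, ∀ j, ∀ _ : j < w.length, p a j = w[j] := by
            intro a j hj
            rw [hpeval a j (by omega)]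
            exact hpre j hj
          refine ⟨InU.base hnil (mem_Lang_of_prefix (hpX a₀) w (hppre a₀)), ?_⟩
          exact Filter.univ_mem' (fun a => (mem_Zcyl_iff (hpX a) w).mpr (hppre a))
        · intro hZ
          have hM : {a | p a ∈ Zcyl F w} ∈ V := hZ.2
          have hMinf := hmemV hM
          have hwu : w.length ≤ u.length := by
            by_contra hlen
            push_neg at hlen
            obtain ⟨a, haM, b, hbM, hab⟩ := hMinf.nontrivial
            have hav : (a : A) = w[u.length] := by
              have h13 := (mem_Zcyl_iff (hpX a) w).mp haM u.length hlen
              simp only [hp] at h13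
              rw [wcat_lt _ _ (by simp), List.getElem_append_right (by omega)] at h13
              simpa using h13
            have hbv : (b : A) = w[u.length] := by
              have h13 := (mem_Zcyl_iff (hpX b) w).mp hbM u.length hlen
              simp only [hp] at h13
              rw [wcat_lt _ _ (by simp), List.getElem_append_right (by omega)] at h13
              simpa using h13
            exact hab (Subtype.ext (hav.trans hbv.symm))
          obtain ⟨a, haM⟩ := hMinf.nonempty
          intro j hj
          have h14 := (mem_Zcyl_iff (hpX a) w).mp haM j hj
          rw [hpeval a j (by omega)] at h14
          rw [ofWord, dif_pos (by omega), h14]
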